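/- Let M be a simple matroid with Cremona basis b, let E_+ = ⋃_{0 < i < j} F_{ij}, and suppose b* is a second Cremona basis with b ∩ b* = {b_0}. Then E_+ = cl(b \ {b_0}) ∩ cl(b* \ {b_0}); in particular E_+ is a flat of M. -/

import Mathlib

open Set

variable {α : Type*}

/-- The set of non-basis elements on the line through `x` and `y`. -/
def Fij (M : Matroid α) (x y : α) : Set α := M.closure {x, y} \ {x, y}

/-- `b` is a Cremona basis: a base of `M` such that the sets
`Fij = cl{bᵢ,bⱼ} \ {bᵢ,bⱼ}` are pairwise disjoint with union `M.E \ b`. -/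
def IsCremonaBasis (M : Matroid α) (b : Set α) : Prop :=
  M.IsBase b ∧
  (∀ x ∈ b, ∀ y ∈ b, ∀ x' ∈ b, ∀ y' ∈ b, x ≠ y → x' ≠ y' →
    ({x, y} : Set α) ≠ {x', y'} → Disjoint (Fij M x y) (Fij M x' y')) ∧
  (⋃ x ∈ b, ⋃ y ∈ b, ⋃ _ : x ≠ y, Fij M x y) = M.E \ b

/-- The `b`-support of a set `S`. -/
def suppb (M : Matroid α) (b S : Set α) : Set α :=
  (b ∩ S) ∪ ⋃ x ∈ b, ⋃ y ∈ b, ⋃ _ : x ≠ y, ⋃ _ : (S ∩ Fij M x y).Nonempty, ({x, y} : Set α)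

/-- Adjacency in the support graph `G_b(S)`: there is an edge between `x` and `y`
for each element of `S ∩ Fij M x y`. -/
def Adjb (M : Matroid α) (b S : Set α) (x y : α) : Prop :=
  x ∈ b ∧ y ∈ b ∧ x ≠ y ∧ (S ∩ Fij M x y).Nonempty

/-- The support graph `G_b(S)` is connected. -/
def SuppConnected (M : Matroid α) (b S : Set α) : Prop :=
  ∀ x ∈ suppb M b S, ∀ y ∈ suppb M b S, Relation.ReflTransGen (Adjb M b S) x y

/-- The vertex set of the connected component of `x` in the support graph `G_b(S)`. -/
def compOf (M : Matroid α) (b S : Set α) (x : α) : Set α :=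
  {y ∈ suppb M b S | Relation.ReflTransGen (Adjb M b S) x y}

/-- A matroid is simple if every pair of (not necessarily distinct) elements
of the ground set is independent. -/
def MSimple (M : Matroid α) : Prop := ∀ e ∈ M.E, ∀ f ∈ M.E, M.Indep {e, f}

/-- A circuit: a minimal dependent set. -/
def MCircuit (M : Matroid α) (C : Set α) : Prop :=
  C ⊆ M.E ∧ ¬ M.Indep C ∧ ∀ x ∈ C, M.Indep (C \ {x})

/-- A matroid is connected if its ground set is nonempty and every two distinct
elements lie on a common circuit. -/
def MConnected (M : Matroid α) : Prop :=
  M.E.Nonempty ∧ ∀ e ∈ M.E, ∀ f ∈ M.E, e = f ∨ ∃ C, MCircuit M C ∧ e ∈ C ∧ f ∈ C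

/-- The rank of a set in a matroid: the supremum of cardinalities of independent subsets. -/
noncomputable def mRank (M : Matroid α) (X : Set α) : ℕ :=
  sSup {n | ∃ I, M.Indep I ∧ I ⊆ X ∧ I.ncard = n}

/-! ### Auxiliary lemmas -/

section Aux

variable {M : Matroid α} {x y e f b0 p q p' q' : α} {Z S I J A B b bs β : Set α}

lemma cl_pair_subset (hx : x ∈ M.closure Z) (hy : y ∈ M.closure Z) :
    M.closure {x, y} ⊆ M.closure Z :=
  M.closure_subset_closure_of_subset_closure (by rintro t (rfl | rfl) <;> assumption)

lemma exch_pair (h1 : e ∈ M.closure {x, y}) (h2 : e ∉ M.closure {y}) :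
    x ∈ M.closure {e, y} :=
  Matroid.mem_closure_insert h2 h1

lemma exch_pair' (h1 : e ∈ M.closure {x, y}) (h2 : e ∉ M.closure {x}) :
    y ∈ M.closure {e, x} := by
  rw [Set.pair_comm] at h1
  exact exch_pair h1 h2

lemma mem_of_indep_cl (hI : M.Indep I) (hx : x ∈ I) (hS : S ⊆ I) (h : x ∈ M.closure S) :
    x ∈ S := by
  by_contra hxS
  exact hI.notMem_closure_sdiff_of_mem hx
    (M.closure_subset_closure (subset_diff_singleton hS hxS) h)

lemma cl_flat (M : Matroid α) (X : Set α) : M.IsFlat (M.closure X) := by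
  have hne : Nonempty {F : Set α // M.IsFlat F ∧ X ∩ M.E ⊆ F} :=
    ⟨⟨M.E, M.ground_isFlat, inter_subset_right⟩⟩
  rw [Matroid.closure_def, sInter_eq_iInter]
  exact Matroid.IsFlat.iInter (ι := {F : Set α // M.IsFlat F ∧ X ∩ M.E ⊆ F}) fun F => F.2.1

lemma MSimple.not_mem_cl (hs : MSimple M) (he : e ∈ M.E) (hf : f ∈ M.E) (hef : e ≠ f) :
    e ∉ M.closure {f} := by
  have h := (hs e he f hf).notMem_closure_sdiff_of_mem (mem_insert e {f})
  have heq : ({e, f} : Set α) \ {e} = {f} := by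
    ext t; simp only [mem_diff, mem_insert_iff, mem_singleton_iff]
    constructor
    · rintro ⟨rfl | rfl, h2⟩ <;> tauto
    · rintro rfl; exact ⟨Or.inr rfl, fun h' => hef h'.symm⟩
  rwa [heq] at h

lemma Fij_comm : Fij M x y = Fij M y x := by
  unfold Fij; rw [Set.pair_comm]

lemma Fij_mk (h1 : e ∈ M.closure {x, y}) (hx : e ≠ x) (hy : e ≠ y) : e ∈ Fij M x y :=
  ⟨h1, fun h => (mem_insert_iff.mp h).elim hx (fun h' => hy (mem_singleton_iff.mp h'))⟩

lemma Fij_ne1 (he : e ∈ Fij M x y) : e ≠ x := fun h => he.2 (h ▸ mem_insert x {y})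

lemma Fij_ne2 (he : e ∈ Fij M x y) : e ≠ y :=
  fun h => he.2 (h ▸ mem_insert_iff.mpr (Or.inr rfl))

lemma mem_cl_pair_left (hx : x ∈ M.E) (hy : y ∈ M.E) : x ∈ M.closure {x, y} :=
  M.subset_closure _ (insert_subset hx (by simpa)) (mem_insert _ _)

lemma mem_cl_pair_right (hx : x ∈ M.E) (hy : y ∈ M.E) : y ∈ M.closure {x, y} :=
  M.subset_closure _ (insert_subset hx (by simpa)) (mem_insert_iff.mpr (Or.inr rfl))

lemma FU1 (hβ : M.Indep β) (hx : x ∈ β) (hy : y ∈ β) (hxy : x ≠ y)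
    (he : e ∈ M.closure {x, y}) (hey : e ∉ M.closure {y})
    (hS : S ⊆ β) (heS : e ∈ M.closure S) : x ∈ S := by
  have hyE : y ∈ M.E := hβ.subset_ground hy
  have hins : insert y S ⊆ M.E := insert_subset hyE (hS.trans hβ.subset_ground)
  have h1 : x ∈ M.closure {e, y} := exch_pair he hey
  have h2 : M.closure {e, y} ⊆ M.closure (insert y S) :=
    cl_pair_subset (M.closure_subset_closure (subset_insert y S) heS)
      (M.subset_closure _ hins (mem_insert y S))
  have h3 : x ∈ insert y S := mem_of_indep_cl hβ hx (insert_subset hy hS) (h2 h1)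
  exact h3.resolve_left hxy

lemma FU (hβ : M.Indep β) (hx : x ∈ β) (hy : y ∈ β) (hxy : x ≠ y)
    (he : e ∈ M.closure {x, y}) (hex : e ∉ M.closure {x}) (hey : e ∉ M.closure {y})
    (hS : S ⊆ β) (heS : e ∈ M.closure S) : x ∈ S ∧ y ∈ S :=
  ⟨FU1 hβ hx hy hxy he hey hS heS,
   FU1 hβ hy hx hxy.symm (by rwa [Set.pair_comm]) hex hS heS⟩

lemma skew_step (hIJ : M.Indep (I ∪ J)) (hdisj : Disjoint I J)
    (hA : M.Indep A) (hAI : A ⊆ M.closure I) (hJfin : J.Finite) : M.Indep (A ∪ J) := by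
  refine Set.Finite.induction_on_subset (motive := fun s _ => M.Indep (A ∪ s)) J hJfin (by simpa using hA) ?_
  rintro a s haJ hsub ha hAs
  rw [union_insert]
  by_cases haA : a ∈ A ∪ s
  · rwa [insert_eq_of_mem haA]
  have haE : a ∈ M.E := hIJ.subset_ground (Or.inr haJ)
  rw [hAs.insert_indep_iff_of_notMem haA]
  refine ⟨haE, fun hacl => ?_⟩
  have h1 : M.closure (A ∪ s) ⊆ M.closure (I ∪ s) := by
    refine M.closure_subset_closure_of_subset_closure (union_subset ?_ ?_)
    · exact hAI.trans (M.closure_subset_closure subset_union_left)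
    · exact (M.subset_closure _ (union_subset (hIJ.subset_ground.trans' subset_union_left)
        (hsub.trans (hIJ.subset_ground.trans' subset_union_right)))).trans'
        subset_union_right
  have h2 : I ∪ s ⊆ (I ∪ J) \ {a} := by
    refine subset_diff_singleton (union_subset_union_right I hsub) ?_
    rintro (haI | has)
    · exact hdisj.ne_of_mem haI haJ rfl
    · exact ha has
  exact hIJ.notMem_closure_sdiff_of_mem (Or.inr haJ)
    (M.closure_subset_closure h2 (h1 hacl))

lemma disj_of_cl (hIJ : M.Indep (I ∪ J)) (hdisj : Disjoint I J) (hAI : A ⊆ M.closure I) :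
    Disjoint J A := by
  rw [disjoint_left]
  intro a haJ haA
  have haI : a ∉ I := fun h => hdisj.ne_of_mem h haJ rfl
  have h2 : I ⊆ (I ∪ J) \ {a} := subset_diff_singleton subset_union_left haI
  exact hIJ.notMem_closure_sdiff_of_mem (Or.inr haJ)
    (M.closure_subset_closure h2 (hAI haA))

lemma skew_union (hIJ : M.Indep (I ∪ J)) (hdisj : Disjoint I J)
    (hA : M.Indep A) (hAI : A ⊆ M.closure I) (hB : M.Indep B) (hBJ : B ⊆ M.closure J)
    (hJfin : J.Finite) (hAfin : A.Finite) : M.Indep (A ∪ B) := by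
  have h1 : M.Indep (A ∪ J) := skew_step hIJ hdisj hA hAI hJfin
  have h2 : M.Indep (J ∪ A) := by rwa [union_comm]
  have h3 : Disjoint J A := disj_of_cl hIJ hdisj hAI
  have h4 : M.Indep (B ∪ A) := skew_step h2 h3 hB hBJ hAfin
  rwa [union_comm]

lemma crem_locate (hb : IsCremonaBasis M b) (he : e ∈ M.E) (heb : e ∉ b) :
    ∃ p q, p ∈ b ∧ q ∈ b ∧ p ≠ q ∧ e ∈ Fij M p q := by
  have h : e ∈ (⋃ x ∈ b, ⋃ y ∈ b, ⋃ _ : x ≠ y, Fij M x y) := by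
    rw [hb.2.2]; exact ⟨he, heb⟩
  simp only [mem_iUnion] at h
  obtain ⟨p, hp, q, hq, hpq, hmem⟩ := h
  exact ⟨p, q, hp, hq, hpq, hmem⟩

lemma crem_ground (hb : IsCremonaBasis M b) (hp : p ∈ b) (hq : q ∈ b) (hpq : p ≠ q)
    (he : e ∈ Fij M p q) : e ∈ M.E ∧ e ∉ b := by
  have h : e ∈ (⋃ x ∈ b, ⋃ y ∈ b, ⋃ _ : x ≠ y, Fij M x y) := by
    simp only [mem_iUnion]; exact ⟨p, hp, q, hq, hpq, he⟩
  rw [hb.2.2] at h; exact h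

lemma crem_uniq (hb : IsCremonaBasis M b) (hp : p ∈ b) (hq : q ∈ b) (hpq : p ≠ q)
    (hp' : p' ∈ b) (hq' : q' ∈ b) (hpq' : p' ≠ q')
    (he : e ∈ Fij M p q) (he' : e ∈ Fij M p' q') : ({p, q} : Set α) = {p', q'} := by
  by_contra hne
  exact (hb.2.1 p hp q hq p' hp' q' hq' hpq hpq' hne).ne_of_mem he he' rfl

/-- normalized locate with respect to a distinguished basis element `b0`. -/
lemma crem_locate' (hb : IsCremonaBasis M b) (hb0 : b0 ∈ b) (he : e ∈ M.E) (heb : e ∉ b) :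
    (∃ p q, p ∈ b ∧ q ∈ b ∧ p ≠ b0 ∧ q ≠ b0 ∧ p ≠ q ∧ e ∈ Fij M p q) ∨
    (∃ s, s ∈ b ∧ s ≠ b0 ∧ e ∈ Fij M b0 s) := by
  obtain ⟨p, q, hp, hq, hpq, hmem⟩ := crem_locate hb he heb
  by_cases hp0 : p = b0
  · subst hp0; exact Or.inr ⟨q, hq, hpq.symm, hmem⟩
  by_cases hq0 : q = b0
  · subst hq0; exact Or.inr ⟨p, hp, hpq, by rwa [Fij_comm] at hmem⟩
  · exact Or.inl ⟨p, q, hp, hq, hp0, hq0, hpq, hmem⟩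

end Aux

/-- Key claim: if `b`, `bs` are Cremona bases of a simple connected matroid with
`b ∩ bs = {b0}`, then no element of `bs` other than `b0` lies in `cl (b \ {b0})`. -/
lemma claimX {M : Matroid α} (hfin : M.E.Finite) (hsimple : MSimple M) (hconn : MConnected M)
    {b bs : Set α} (hb : IsCremonaBasis M b) (hbs : IsCremonaBasis M bs)
    {b0 : α} (hinter : b ∩ bs = {b0}) :
    ∀ u ∈ bs, u ≠ b0 → u ∉ M.closure (b \ {b0}) := by
  have hbI : M.Indep b := hb.1.indep
  have hbsI : M.Indep bs := hbs.1.indep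
  have hbE : b ⊆ M.E := hb.1.subset_ground
  have hbsE : bs ⊆ M.E := hbs.1.subset_ground
  have hb0b : b0 ∈ b := by
    have h : b0 ∈ b ∩ bs := by rw [hinter]; rfl
    exact h.1
  have hb0bs : b0 ∈ bs := by
    have h : b0 ∈ b ∩ bs := by rw [hinter]; rfl
    exact h.2
  have honly : ∀ z, z ∈ b → z ∈ bs → z = b0 := by
    intro z h1 h2
    have h : z ∈ b ∩ bs := ⟨h1, h2⟩
    rwa [hinter] at h
  have hnc : ∀ e f : α, e ∈ M.E → f ∈ M.E → e ≠ f → e ∉ M.closure {f} :=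
    fun e f he hf hef => hsimple.not_mem_cl he hf hef
  have hsubH : ∀ z, z ∈ b → z ≠ b0 → z ∈ M.closure (b \ {b0}) :=
    fun z hz hz0 => M.subset_closure _ (diff_subset.trans hbE) ⟨hz, hz0⟩
  have hsubHs : ∀ z, z ∈ bs → z ≠ b0 → z ∈ M.closure (bs \ {b0}) :=
    fun z hz hz0 => M.subset_closure _ (diff_subset.trans hbsE) ⟨hz, hz0⟩
  have hb0H : b0 ∉ M.closure (b \ {b0}) := hbI.notMem_closure_sdiff_of_mem hb0b
  have hb0Hs : b0 ∉ M.closure (bs \ {b0}) := hbsI.notMem_closure_sdiff_of_mem hb0bs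
  -- f3 : basic facts about elements on a `b`-line through `b0`
  have f3 : ∀ s, s ∈ b → s ≠ b0 → ∀ e, e ∈ Fij M b0 s →
      e ∈ M.E ∧ e ∉ b ∧ e ∉ M.closure (b \ {b0}) ∧
        b0 ∈ M.closure {e, s} ∧ s ∈ M.closure {b0, e} := by
    intro s hsb hs0 e he
    obtain ⟨heE, henb⟩ := crem_ground hb hb0b hsb (Ne.symm hs0) he
    have hes : e ≠ s := Fij_ne2 he
    have heb0 : e ≠ b0 := Fij_ne1 he
    have h4 : b0 ∈ M.closure {e, s} := exch_pair he.1 (hnc e s heE (hbE hsb) hes)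
    have h5 : s ∈ M.closure {b0, e} := by
      have h1 := exch_pair' he.1 (hnc e b0 heE (hbE hb0b) heb0)
      rwa [Set.pair_comm] at h1
    refine ⟨heE, henb, fun heH => hb0H ?_, h4, h5⟩
    exact cl_pair_subset heH (hsubH s hsb hs0) h4
  -- f4 : elements on a `bs`-line avoiding `b0` lie in `cl (b \ {b0})`
  have f4 : ∀ a c e, a ∈ bs → c ∈ bs → a ≠ b0 → c ≠ b0 → a ≠ c → e ∈ Fij M a c →
      e ∈ M.closure (b \ {b0}) := by
    intro a c e ha hc ha0 hc0 hac he
    obtain ⟨heE, henbs⟩ := crem_ground hbs ha hc hac he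
    by_cases heb : e ∈ b
    · rcases eq_or_ne e b0 with rfl | he0
      · exact absurd (cl_pair_subset (hsubHs a ha ha0) (hsubHs c hc hc0) he.1) hb0Hs
      · exact hsubH e heb he0
    rcases crem_locate' hb hb0b heE heb with ⟨p, q, hp, hq, hp0, hq0, hpq, hmem⟩ |
      ⟨s, hs, hs0, hmem⟩
    · exact cl_pair_subset (hsubH p hp hp0) (hsubH q hq hq0) hmem.1
    obtain ⟨-, -, -, hb0cl, -⟩ := f3 s hs hs0 e hmem
    have hsnbs : s ∉ bs := fun h => hs0 (honly s hs h)
    rcases crem_locate' hbs hb0bs (hbE hs) hsnbs with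
      ⟨a', c', ha', hc', ha'0, hc'0, hac', hmem'⟩ | ⟨c', hc', hc'0, hmem'⟩
    · have h1 : e ∈ M.closure (bs \ {b0}) :=
        cl_pair_subset (hsubHs a ha ha0) (hsubHs c hc hc0) he.1
      have h2 : s ∈ M.closure (bs \ {b0}) :=
        cl_pair_subset (hsubHs a' ha' ha'0) (hsubHs c' hc' hc'0) hmem'.1
      exact absurd (cl_pair_subset h1 h2 hb0cl) hb0Hs
    · have h1 : e ∈ M.closure {b0, c'} :=
        cl_pair_subset (mem_cl_pair_left (hbsE hb0bs) (hbsE hc')) hmem'.1 hmem.1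
      have h2 : e ∈ Fij M b0 c' :=
        Fij_mk h1 (Fij_ne1 hmem) (fun h => henbs (h ▸ hc'))
      have hpair := crem_uniq hbs ha hc hac hb0bs hc' (Ne.symm hc'0) he h2
      have hb0m : b0 ∈ ({a, c} : Set α) := by rw [hpair]; exact mem_insert _ _
      rcases hb0m with h | h
      · exact absurd h.symm ha0
      · exact absurd (mem_singleton_iff.mp h).symm hc0
  -- f5 : an element of bs \ {b0} outside cl(b \ {b0}) lies on a b-line through b0
  have f5 : ∀ u', u' ∈ bs → u' ≠ b0 → u' ∉ M.closure (b \ {b0}) →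
      ∃ s, s ∈ b ∧ s ≠ b0 ∧ u' ∈ Fij M b0 s := by
    intro u' hu' hu'0 hu'H
    have hu'nb : u' ∉ b := fun h => hu'0 (honly u' h hu')
    rcases crem_locate' hb hb0b (hbsE hu') hu'nb with
      ⟨p, q, hp, hq, hp0, hq0, hpq, hmem⟩ | h
    · exact absurd (cl_pair_subset (hsubH p hp hp0) (hsubH q hq hq0) hmem.1) hu'H
    · exact h
  set S : Set α := {s | s ∈ b ∧ s ≠ b0 ∧ ∃ u', u' ∈ bs ∧ u' ≠ b0 ∧ u' ∈ Fij M b0 s}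
    with hSdef
  have hSb : ∀ s ∈ S, s ∈ b := fun s hs => hs.1
  have hS0 : ∀ s ∈ S, s ≠ b0 := fun s hs => hs.2.1
  -- f6 : elements of b outside {b0} ∪ S lie on a bs-line with both ends in bs ∩ cl(b\{b0})
  have f6 : ∀ t, t ∈ b → t ≠ b0 → t ∉ S →
      ∃ a c, a ∈ bs ∧ c ∈ bs ∧ a ≠ b0 ∧ c ≠ b0 ∧ a ∈ M.closure (b \ {b0}) ∧
        c ∈ M.closure (b \ {b0}) ∧ a ≠ c ∧ t ∈ M.closure {a, c} := by
    intro t htb ht0 htS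
    have htnbs : t ∉ bs := fun h => ht0 (honly t htb h)
    rcases crem_locate' hbs hb0bs (hbE htb) htnbs with
      ⟨a, c, ha, hc, ha0, hc0, hac, hmem⟩ | ⟨c, hc, hc0, hmem⟩
    swap
    · exfalso
      have h1 : c ∈ M.closure {b0, t} := by
        have h := exch_pair' hmem.1 (hnc t b0 (hbE htb) (hbE hb0b) ht0)
        rwa [Set.pair_comm] at h
      have h2 : c ∈ Fij M b0 t :=
        Fij_mk h1 hc0 (fun h => htnbs (h ▸ hc))
      exact htS ⟨htb, ht0, c, hc, hc0, h2⟩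
    by_cases haH : a ∈ M.closure (b \ {b0})
    · by_cases hcH : c ∈ M.closure (b \ {b0})
      · exact ⟨a, c, ha, hc, ha0, hc0, haH, hcH, hac, hmem.1⟩
      · exfalso
        have h1 : c ∈ M.closure {t, a} :=
          exch_pair' hmem.1 (hnc t a (hbE htb) (hbsE ha) (fun h => htnbs (h ▸ ha)))
        exact hcH (cl_pair_subset (hsubH t htb ht0) haH h1)
    · exfalso
      by_cases hcH : c ∈ M.closure (b \ {b0})
      · have h1 : a ∈ M.closure {t, c} :=
          exch_pair hmem.1 (hnc t c (hbE htb) (hbsE hc) (fun h => htnbs (h ▸ hc)))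
        exact haH (cl_pair_subset (hsubH t htb ht0) hcH h1)
      · obtain ⟨sa, hsa, hsa0, hamem⟩ := f5 a ha ha0 haH
        obtain ⟨sc, hsc, hsc0, hcmem⟩ := f5 c hc hc0 hcH
        have hsaS : sa ∈ S := ⟨hsa, hsa0, a, ha, ha0, hamem⟩
        have hscS : sc ∈ S := ⟨hsc, hsc0, c, hc, hc0, hcmem⟩
        have hZ : ({b0, sa, sc} : Set α) ⊆ b := by
          rintro z (rfl | rfl | rfl) <;> assumption
        have hZE : ({b0, sa, sc} : Set α) ⊆ M.E := hZ.trans hbE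
        have hacl : a ∈ M.closure {b0, sa, sc} :=
          cl_pair_subset (M.subset_closure _ hZE (by left; rfl))
            (M.subset_closure _ hZE (by right; left; rfl)) hamem.1
        have hccl : c ∈ M.closure {b0, sa, sc} :=
          cl_pair_subset (M.subset_closure _ hZE (by left; rfl))
            (M.subset_closure _ hZE (by right; right; rfl)) hcmem.1
        have h1 : t ∈ M.closure {b0, sa, sc} := cl_pair_subset hacl hccl hmem.1
        have h2 : t ∈ ({b0, sa, sc} : Set α) := mem_of_indep_cl hbI htb hZ h1
        simp only [mem_insert_iff, mem_singleton_iff] at h2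
        rcases h2 with h | h | h
        · exact ht0 h
        · exact htS (by rw [h]; exact hsaS)
        · exact htS (by rw [h]; exact hscS)
  -- f7 : no element on a b-line b0--t with t ∉ S
  have f7 : ∀ t, t ∈ b → t ≠ b0 → t ∉ S → ∀ e, e ∈ Fij M b0 t → False := by
    intro t htb ht0 htS e he
    obtain ⟨heE, henb, heH, hb0cl, htcl⟩ := f3 t htb ht0 e he
    by_cases hebs : e ∈ bs
    · exact htS ⟨htb, ht0, e, hebs, Fij_ne1 he, he⟩
    rcases crem_locate' hbs hb0bs heE hebs with
      ⟨a, c, ha, hc, ha0, hc0, hac, hmem⟩ | ⟨c, hc, hc0, hmem⟩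
    · exact heH (f4 a c e ha hc ha0 hc0 hac hmem)
    · have h1 : t ∈ M.closure {b0, c} :=
        cl_pair_subset (mem_cl_pair_left (hbE hb0b) (hbsE hc)) hmem.1 htcl
      have h2 : c ∈ M.closure {b0, t} := by
        have h := exch_pair' h1 (hnc t b0 (hbE htb) (hbE hb0b) ht0)
        rwa [Set.pair_comm] at h
      have h3 : c ∈ Fij M b0 t :=
        Fij_mk h2 hc0 (fun h => ht0 (honly t htb (h ▸ hc)))
      exact htS ⟨htb, ht0, c, hc, hc0, h3⟩
  -- f8 : no element on a b-line s--t with s ∈ S, t ∉ S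
  have f8 : ∀ s, s ∈ S → ∀ t, t ∈ b → t ≠ b0 → t ∉ S → ∀ e, e ∈ Fij M s t → False := by
    intro s hsS t htb ht0 htS e he
    obtain ⟨hsb, hs0, u', hu'bs, hu'0, hu'mem⟩ := hsS
    have hsS' : s ∈ S := ⟨hsb, hs0, u', hu'bs, hu'0, hu'mem⟩
    obtain ⟨hu'E, hu'nb, hu'H, hb0u', hsu'⟩ := f3 s hsb hs0 u' hu'mem
    have hst : s ≠ t := fun h => htS (h ▸ hsS')
    obtain ⟨heE, henb⟩ := crem_ground hb hsb htb hst he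
    have heH : e ∈ M.closure (b \ {b0}) :=
      cl_pair_subset (hsubH s hsb hs0) (hsubH t htb ht0) he.1
    have hes : e ≠ s := Fij_ne1 he
    have het : e ≠ t := Fij_ne2 he
    have htcl : t ∈ M.closure {e, s} :=
      exch_pair' he.1 (hnc e s heE (hbE hsb) hes)
    have hscl : s ∈ M.closure {e, t} :=
      exch_pair he.1 (hnc e t heE (hbE htb) het)
    obtain ⟨a', c', ha', hc', ha'0, hc'0, ha'H, hc'H, ha'c', htmem⟩ := f6 t htb ht0 htS
    have hta' : t ≠ a' := fun h => ht0 (honly t htb (h ▸ ha'))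
    have htc' : t ≠ c' := fun h => ht0 (honly t htb (h ▸ hc'))
    by_cases hebs : e ∈ bs
    · have hZ : ({e, b0, u'} : Set α) ⊆ bs := by
        rintro z (rfl | rfl | rfl) <;> assumption
      have hZE : ({e, b0, u'} : Set α) ⊆ M.E := hZ.trans hbsE
      have hscl2 : s ∈ M.closure {e, b0, u'} :=
        cl_pair_subset (M.subset_closure _ hZE (by right; left; rfl))
          (M.subset_closure _ hZE (by right; right; rfl)) hsu'
      have h1 : t ∈ M.closure {e, b0, u'} :=
        cl_pair_subset (M.subset_closure _ hZE (by left; rfl)) hscl2 htcl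
      obtain ⟨hA, hC⟩ := FU hbsI ha' hc' ha'c' htmem
        (hnc t a' (hbE htb) (hbsE ha') hta') (hnc t c' (hbE htb) (hbsE hc') htc') hZ h1
      have ha'e : a' = e := by
        simp only [mem_insert_iff, mem_singleton_iff] at hA
        rcases hA with h | h | h
        · exact h
        · exact absurd h ha'0
        · exact absurd ha'H (by rw [h]; exact hu'H)
      have hc'e : c' = e := by
        simp only [mem_insert_iff, mem_singleton_iff] at hC
        rcases hC with h | h | h
        · exact h
        · exact absurd h hc'0
        · exact absurd hc'H (by rw [h]; exact hu'H)
      exact ha'c' (ha'e.trans hc'e.symm)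
    rcases crem_locate' hbs hb0bs heE hebs with
      ⟨a, c, ha, hc, ha0, hc0, hac, hmem⟩ | ⟨c, hc, hc0, hmem⟩
    swap
    · by_cases hcH : c ∈ M.closure (b \ {b0})
      · have h1 : b0 ∈ M.closure {e, c} :=
          exch_pair hmem.1 (hnc e c heE (hbsE hc) (fun h => hebs (h ▸ hc)))
        exact hb0H (cl_pair_subset heH hcH h1)
      · obtain ⟨sc, hsc, hsc0, hcmem⟩ := f5 c hc hc0 hcH
        have h1 : e ∈ M.closure {b0, sc} :=
          cl_pair_subset (mem_cl_pair_left (hbE hb0b) (hbE hsc)) hcmem.1 hmem.1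
        have h2 : e ∈ Fij M b0 sc :=
          Fij_mk h1 (fun h => henb (h ▸ hb0b)) (fun h => henb (h ▸ hsc))
        have hpair := crem_uniq hb hsb htb hst hb0b hsc (Ne.symm hsc0) he h2
        have hb0m : b0 ∈ ({s, t} : Set α) := by rw [hpair]; exact mem_insert _ _
        rcases hb0m with h | h
        · exact hs0 h.symm
        · exact ht0 (mem_singleton_iff.mp h).symm
    · by_cases haH : a ∈ M.closure (b \ {b0})
      · by_cases hcH : c ∈ M.closure (b \ {b0})
        · -- both ends of e's bs-line are in cl(b \ {b0})
          have hZ : ({a, c, b0, u'} : Set α) ⊆ bs := by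
            rintro z (rfl | rfl | rfl | rfl) <;> assumption
          have hZE : ({a, c, b0, u'} : Set α) ⊆ M.E := hZ.trans hbsE
          have hecl : e ∈ M.closure {a, c, b0, u'} :=
            cl_pair_subset (M.subset_closure _ hZE (by left; rfl))
              (M.subset_closure _ hZE (by right; left; rfl)) hmem.1
          have hscl2 : s ∈ M.closure {a, c, b0, u'} :=
            cl_pair_subset (M.subset_closure _ hZE (by right; right; left; rfl))
              (M.subset_closure _ hZE (by right; right; right; rfl)) hsu'
          have h1 : t ∈ M.closure {a, c, b0, u'} := cl_pair_subset hecl hscl2 htcl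
          obtain ⟨hA, hC⟩ := FU hbsI ha' hc' ha'c' htmem
            (hnc t a' (hbE htb) (hbsE ha') hta') (hnc t c' (hbE htb) (hbsE hc') htc') hZ h1
          have ha'cl : a' ∈ M.closure {a, c} := by
            simp only [mem_insert_iff, mem_singleton_iff] at hA
            rcases hA with h | h | h | h
            · rw [h]; exact mem_cl_pair_left (hbsE ha) (hbsE hc)
            · rw [h]; exact mem_cl_pair_right (hbsE ha) (hbsE hc)
            · exact absurd h ha'0
            · exact absurd ha'H (by rw [h]; exact hu'H)
          have hc'cl : c' ∈ M.closure {a, c} := by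
            simp only [mem_insert_iff, mem_singleton_iff] at hC
            rcases hC with h | h | h | h
            · rw [h]; exact mem_cl_pair_left (hbsE ha) (hbsE hc)
            · rw [h]; exact mem_cl_pair_right (hbsE ha) (hbsE hc)
            · exact absurd h hc'0
            · exact absurd hc'H (by rw [h]; exact hu'H)
          have htcl2 : t ∈ M.closure {a, c} := cl_pair_subset ha'cl hc'cl htmem
          have hscl3 : s ∈ M.closure {a, c} := cl_pair_subset hmem.1 htcl2 hscl
          have hfinal := FU hbsI hb0bs hu'bs (Ne.symm hu'0) hsu'
            (hnc s b0 (hbE hsb) (hbE hb0b) hs0)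
            (hnc s u' (hbE hsb) hu'E (fun h => hu'nb (h ▸ hsb)))
            (by rintro z (rfl | rfl) <;> assumption : ({a, c} : Set α) ⊆ bs) hscl3
          rcases hfinal.1 with h | h
          · exact ha0 h.symm
          · exact hc0 (mem_singleton_iff.mp h).symm
        · have h1 : c ∈ M.closure {e, a} :=
            exch_pair' hmem.1 (hnc e a heE (hbsE ha) (fun h => hebs (h ▸ ha)))
          exact hcH (cl_pair_subset heH haH h1)
      · by_cases hcH : c ∈ M.closure (b \ {b0})
        · have h1 : a ∈ M.closure {e, c} :=
            exch_pair hmem.1 (hnc e c heE (hbsE hc) (fun h => hebs (h ▸ hc)))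
          exact haH (cl_pair_subset heH hcH h1)
        · obtain ⟨sa, hsa, hsa0, hamem⟩ := f5 a ha ha0 haH
          obtain ⟨sc, hsc, hsc0, hcmem⟩ := f5 c hc hc0 hcH
          have hsaS : sa ∈ S := ⟨hsa, hsa0, a, ha, ha0, hamem⟩
          have hscS : sc ∈ S := ⟨hsc, hsc0, c, hc, hc0, hcmem⟩
          have hZ : ({b0, sa, sc} : Set α) ⊆ b := by
            rintro z (rfl | rfl | rfl) <;> assumption
          have hZE : ({b0, sa, sc} : Set α) ⊆ M.E := hZ.trans hbE
          have hecl : e ∈ M.closure {b0, sa, sc} := cl_pair_subset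
            (cl_pair_subset (M.subset_closure _ hZE (by left; rfl))
              (M.subset_closure _ hZE (by right; left; rfl)) hamem.1)
            (cl_pair_subset (M.subset_closure _ hZE (by left; rfl))
              (M.subset_closure _ hZE (by right; right; rfl)) hcmem.1)
            hmem.1
          have hfinal := FU hbI hsb htb hst he.1 (hnc e s heE (hbE hsb) hes)
            (hnc e t heE (hbE htb) het) hZ hecl
          simp only [mem_insert_iff, mem_singleton_iff] at hfinal
          rcases hfinal.2 with h | h | h
          · exact ht0 h
          · exact htS (by rw [h]; exact hsaS)
          · exact htS (by rw [h]; exact hscS)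
  -- f9 : covering of the ground set by two closures
  have f9 : ∀ e ∈ M.E, e ∈ M.closure (bs ∩ M.closure (b \ {b0})) ∨
      e ∈ M.closure (insert b0 S) := by
    intro e heE
    have hXb : insert b0 S ⊆ b := insert_subset hb0b (fun z hz => hz.1)
    have hXE : insert b0 S ⊆ M.E := hXb.trans hbE
    have hB'E : bs ∩ M.closure (b \ {b0}) ⊆ M.E := inter_subset_left.trans hbsE
    have hT : ∀ z, z ∈ b → z ≠ b0 → z ∉ S →
        z ∈ M.closure (bs ∩ M.closure (b \ {b0})) := by
      intro z hz hz0 hzS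
      obtain ⟨a, c, ha, hc, -, -, haH, hcH, hac, hzcl⟩ := f6 z hz hz0 hzS
      exact cl_pair_subset (M.subset_closure _ hB'E ⟨ha, haH⟩)
        (M.subset_closure _ hB'E ⟨hc, hcH⟩) hzcl
    have hX : ∀ z, z ∈ insert b0 S → z ∈ M.closure (insert b0 S) :=
      fun z hz => M.subset_closure _ hXE hz
    by_cases heb : e ∈ b
    · rcases eq_or_ne e b0 with rfl | he0
      · exact Or.inr (hX _ (mem_insert _ _))
      by_cases heS : e ∈ S
      · exact Or.inr (hX _ (Or.inr heS))
      · exact Or.inl (hT e heb he0 heS)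
    obtain ⟨p, q, hp, hq, hpq, hmem⟩ := crem_locate hb heE heb
    have hclass : ∀ z, z ∈ b → z = b0 ∨ z ∈ S ∨ (z ≠ b0 ∧ z ∉ S) := by
      intro z hz
      by_cases h1 : z = b0
      · exact Or.inl h1
      by_cases h2 : z ∈ S
      · exact Or.inr (Or.inl h2)
      · exact Or.inr (Or.inr ⟨h1, h2⟩)
    rcases hclass p hp with hp1 | hp1 | ⟨hp1, hp2⟩ <;>
      rcases hclass q hq with hq1 | hq1 | ⟨hq1, hq2⟩
    · exact absurd (hp1.trans hq1.symm) hpq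
    · subst hp1
      exact Or.inr (cl_pair_subset (hX _ (mem_insert _ _)) (hX _ (Or.inr hq1)) hmem.1)
    · subst hp1
      exact absurd hmem (fun h => f7 q hq hq1 hq2 e h)
    · subst hq1
      rw [Fij_comm] at hmem
      exact Or.inr (cl_pair_subset (hX _ (mem_insert _ _)) (hX _ (Or.inr hp1)) hmem.1)
    · exact Or.inr (cl_pair_subset (hX _ (Or.inr hp1)) (hX _ (Or.inr hq1)) hmem.1)
    · exact absurd hmem (fun h => f8 p hp1 q hq hq1 hq2 e h)
    · subst hq1
      rw [Fij_comm] at hmem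
      exact absurd hmem (fun h => f7 p hp hp1 hp2 e h)
    · rw [Fij_comm] at hmem
      exact absurd hmem (fun h => f8 q hq1 p hp hp1 hp2 e h)
    · exact Or.inl (cl_pair_subset (hT p hp hp1 hp2) (hT q hq hq1 hq2) hmem.1)
  -- choice of witnesses for S
  have hwex : ∀ s : α, ∃ u', s ∈ S → (u' ∈ bs ∧ u' ≠ b0 ∧ u' ∈ Fij M b0 s) := by
    intro s
    by_cases h : s ∈ S
    · obtain ⟨-, -, u', hu'⟩ := h
      exact ⟨u', fun _ => hu'⟩
    · exact ⟨b0, fun h' => absurd h' h⟩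
  choose w hw using hwex
  have hwbs : ∀ s ∈ S, w s ∈ bs := fun s hs => (hw s hs).1
  have hw0 : ∀ s ∈ S, w s ≠ b0 := fun s hs => (hw s hs).2.1
  have hwF : ∀ s ∈ S, w s ∈ Fij M b0 s := fun s hs => (hw s hs).2.2
  have hwH : ∀ s ∈ S, w s ∉ M.closure (b \ {b0}) :=
    fun s hs => (f3 s (hSb s hs) (hS0 s hs) (w s) (hwF s hs)).2.2.1
  have hwinj : ∀ s ∈ S, ∀ s' ∈ S, w s = w s' → s = s' := by
    intro s hs s' hs' heq
    have h1 := hwF s hs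
    have h2 := hwF s' hs'
    rw [heq] at h1
    have hpair := crem_uniq hb hb0b (hSb s' hs') (Ne.symm (hS0 s' hs')) hb0b (hSb s hs)
      (Ne.symm (hS0 s hs)) h2 h1
    have hmem2 : s' ∈ ({b0, s'} : Set α) := mem_insert_iff.mpr (Or.inr rfl)
    rw [hpair] at hmem2
    rcases hmem2 with h | h
    · exact absurd h (hS0 s' hs')
    · exact (mem_singleton_iff.mp h).symm
  have hwSdisj : ∀ s', s' ∈ S → s' ∉ bs := fun s' hs' h => (hS0 s' hs') (honly s' (hSb s' hs') h)
  have hSfin : S.Finite := hfin.subset (fun s hs => hbE (hSb s hs))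
  -- f10 : exchange induction, replacing off-closure bs-elements by their S-partners
  have f10' : M.Indep ((bs \ (w '' S)) ∪ S) := by
    refine Set.Finite.induction_on_subset (motive := fun T _ => M.Indep ((bs \ (w '' T)) ∪ T)) S hSfin (by simpa using hbsI) ?_
    rintro s S'' hsS hS''S hsS'' hIH
    have hwsS'' : w s ∉ w '' S'' := by
      rintro ⟨s'', hs'', heq⟩
      have h := hwinj s'' (hS''S hs'') s hsS heq
      rw [h] at hs''
      exact hsS'' hs''
    have hJE : (bs \ (w '' S'')) ∪ S'' ⊆ M.E :=
      union_subset (diff_subset.trans hbsE) ((hS''S).trans (fun z hz => hbE (hSb z hz)))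
    have hwsJ : w s ∈ (bs \ (w '' S'')) ∪ S'' := Or.inl ⟨hwbs s hsS, hwsS''⟩
    have hkey : M.Indep (insert s (((bs \ (w '' S'')) ∪ S'') \ {w s})) := by
      have hJd : M.Indep (((bs \ (w '' S'')) ∪ S'') \ {w s}) := hIH.subset diff_subset
      have hsnot : s ∉ ((bs \ (w '' S'')) ∪ S'') \ {w s} := by
        rintro ⟨h1 | h2, -⟩
        · exact hwSdisj s hsS h1.1
        · exact hsS'' h2
      rw [hJd.insert_indep_iff_of_notMem hsnot]
      refine ⟨hbE (hSb s hsS), fun hscl => ?_⟩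
      have hb0J : b0 ∈ ((bs \ (w '' S'')) ∪ S'') \ {w s} := by
        refine ⟨Or.inl ⟨hb0bs, ?_⟩, fun h => (hw0 s hsS) (mem_singleton_iff.mp h).symm⟩
        rintro ⟨s'', hs'', heq⟩
        exact hw0 s'' (hS''S hs'') heq
      have hws_cl : w s ∈ M.closure (((bs \ (w '' S'')) ∪ S'') \ {w s}) :=
        cl_pair_subset (M.subset_closure _ (diff_subset.trans hJE) hb0J) hscl (hwF s hsS).1
      exact hIH.notMem_closure_sdiff_of_mem hwsJ hws_cl
    have hgoal_eq : bs \ (w '' insert s S'') ∪ insert s S'' =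
        insert s (((bs \ (w '' S'')) ∪ S'') \ {w s}) := by
      rw [image_insert_eq]
      rw [show bs \ insert (w s) (w '' S'') = (bs \ (w '' S'')) \ {w s} by
        rw [diff_diff, union_singleton]]
      rw [union_insert]
      congr 1
      rw [union_diff_distrib,
        diff_singleton_eq_self (fun h => hwSdisj (w s) (hS''S h) (hwbs s hsS))]
    rw [hgoal_eq]
    exact hkey
  have hsubBX : (bs ∩ M.closure (b \ {b0})) ∪ insert b0 S ⊆ (bs \ (w '' S)) ∪ S := by
    rintro z (⟨hzbs, hzH⟩ | hz)
    · refine Or.inl ⟨hzbs, ?_⟩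
      rintro ⟨s', hs', heq⟩
      exact hwH s' hs' (by rw [heq]; exact hzH)
    · rcases hz with rfl | hzS
      · refine Or.inl ⟨hb0bs, ?_⟩
        rintro ⟨s', hs', heq⟩
        exact hw0 s' hs' heq
      · exact Or.inr hzS
  have f10 : M.Indep ((bs ∩ M.closure (b \ {b0})) ∪ insert b0 S) := f10'.subset hsubBX
  -- final circuit argument
  intro u hu hu0 huH
  rcases hconn.2 b0 (hbE hb0b) u (hbsE hu) with heq | ⟨C, hC, hb0C, huC⟩
  · exact hu0 heq.symm
  have hclB'H : M.closure (bs ∩ M.closure (b \ {b0})) ⊆ M.closure (b \ {b0}) :=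
    M.closure_subset_closure_of_subset_closure inter_subset_right
  have hb0ncl : b0 ∉ M.closure (bs ∩ M.closure (b \ {b0})) := fun h => hb0H (hclB'H h)
  have hC1 : M.Indep (C ∩ M.closure (bs ∩ M.closure (b \ {b0}))) :=
    (hC.2.2 b0 hb0C).subset (subset_diff_singleton inter_subset_left
      (fun h => hb0ncl h.2))
  have huclB' : u ∈ M.closure (bs ∩ M.closure (b \ {b0})) :=
    M.subset_closure _ (inter_subset_left.trans hbsE) ⟨hu, huH⟩
  have hC2 : M.Indep (C \ M.closure (bs ∩ M.closure (b \ {b0}))) :=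
    (hC.2.2 u huC).subset (subset_diff_singleton diff_subset (fun h => h.2 huclB'))
  have hC2cl : C \ M.closure (bs ∩ M.closure (b \ {b0})) ⊆ M.closure (insert b0 S) := by
    rintro z ⟨hzC, hzn⟩
    rcases f9 z (hC.1 hzC) with h | h
    · exact absurd h hzn
    · exact h
  have hdisj : Disjoint (bs ∩ M.closure (b \ {b0})) (insert b0 S) := by
    rw [disjoint_left]
    rintro z ⟨hzbs, hzH⟩ (rfl | hzS)
    · exact hb0H hzH
    · exact (hS0 z hzS) (honly z (hSb z hzS) hzbs)
  have happ := skew_union f10 hdisj hC1 inter_subset_right hC2 hC2cl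
    (hfin.subset ((insert_subset hb0b fun z hz => (hSb z hz)).trans hbE))
    (hfin.subset (inter_subset_left.trans hC.1))
  rw [inter_union_diff] at happ
  exact hC.2.1 happ

/-- With two Cremona bases `b`, `b*` meeting exactly in `b₀`, the set
`E₊ = ⋃_{0<i<j} F_{ij}` equals `cl(b \ {b₀}) ∩ cl(b* \ {b₀})`; in particular it is
a flat. -/
theorem stmt16 (M : Matroid α) (hfin : M.E.Finite) (hsimple : MSimple M)
    (hconn : MConnected M) (d : ℕ) (hd : 2 ≤ d) (hrk : mRank M M.E = d + 1)
    (b bs : Set α) (hb : IsCremonaBasis M b) (hbs : IsCremonaBasis M bs) (hne : b ≠ bs)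
    (b0 : α) (hinter : b ∩ bs = {b0}) :
    (⋃ x ∈ b \ {b0}, ⋃ y ∈ b \ {b0}, ⋃ _ : x ≠ y, Fij M x y) =
        M.closure (b \ {b0}) ∩ M.closure (bs \ {b0}) ∧
      M.IsFlat (⋃ x ∈ b \ {b0}, ⋃ y ∈ b \ {b0}, ⋃ _ : x ≠ y, Fij M x y) := by
  have key := claimX hfin hsimple hconn hb hbs hinter
  have key' := claimX hfin hsimple hconn hbs hb
    (show bs ∩ b = {b0} by rw [Set.inter_comm]; exact hinter)
  have hbI : M.Indep b := hb.1.indep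
  have hbE : b ⊆ M.E := hb.1.subset_ground
  have hbsE : bs ⊆ M.E := hbs.1.subset_ground
  have hb0b : b0 ∈ b := (show b0 ∈ b ∩ bs by rw [hinter]; rfl).1
  have hb0bs : b0 ∈ bs := (show b0 ∈ b ∩ bs by rw [hinter]; rfl).2
  have honly : ∀ z, z ∈ b → z ∈ bs → z = b0 := fun z h1 h2 => by
    have h : z ∈ b ∩ bs := ⟨h1, h2⟩
    rwa [hinter] at h
  have hnc : ∀ e f : α, e ∈ M.E → f ∈ M.E → e ≠ f → e ∉ M.closure {f} :=
    fun e f he hf hef => hsimple.not_mem_cl he hf hef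
  have hsubH : ∀ z, z ∈ b → z ≠ b0 → z ∈ M.closure (b \ {b0}) :=
    fun z hz hz0 => M.subset_closure _ (diff_subset.trans hbE) ⟨hz, hz0⟩
  have hsubHs : ∀ z, z ∈ bs → z ≠ b0 → z ∈ M.closure (bs \ {b0}) :=
    fun z hz hz0 => M.subset_closure _ (diff_subset.trans hbsE) ⟨hz, hz0⟩
  have hb0H : b0 ∉ M.closure (b \ {b0}) := hbI.notMem_closure_sdiff_of_mem hb0b
  have hEplus : (⋃ x ∈ b \ {b0}, ⋃ y ∈ b \ {b0}, ⋃ _ : x ≠ y, Fij M x y) =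
      M.closure (b \ {b0}) ∩ M.closure (bs \ {b0}) := by
    apply Subset.antisymm
    · intro e he
      simp only [mem_iUnion, mem_diff, mem_singleton_iff] at he
      obtain ⟨x, ⟨hx, hx0⟩, y, ⟨hy, hy0⟩, hxy, hmem⟩ := he
      have heH : e ∈ M.closure (b \ {b0}) :=
        cl_pair_subset (hsubH x hx hx0) (hsubH y hy hy0) hmem.1
      obtain ⟨heE, henb⟩ := crem_ground hb hx hy hxy hmem
      refine ⟨heH, ?_⟩
      have henbs : e ∉ bs :=
        fun h => key e h (fun h0 => henb (by rw [h0]; exact hb0b)) heH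
      rcases crem_locate' hbs hb0bs heE henbs with
        ⟨a, c, ha, hc, ha0, hc0, hac, hmem'⟩ | ⟨c, hc, hc0, hmem'⟩
      · exact cl_pair_subset (hsubHs a ha ha0) (hsubHs c hc hc0) hmem'.1
      · exfalso
        have hcH : c ∉ M.closure (b \ {b0}) := key c hc hc0
        have hcnb : c ∉ b := fun h => hc0 (honly c h hc)
        rcases crem_locate' hb hb0b (hbsE hc) hcnb with
          ⟨p, q, hp, hq, hp0, hq0, hpq, hcmem⟩ | ⟨sc, hsc, hsc0, hcmem⟩
        · exact hcH (cl_pair_subset (hsubH p hp hp0) (hsubH q hq hq0) hcmem.1)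
        · have h1 : e ∈ M.closure {b0, sc} :=
            cl_pair_subset (mem_cl_pair_left (hbE hb0b) (hbE hsc)) hcmem.1 hmem'.1
          have h2 : e ∈ Fij M b0 sc :=
            Fij_mk h1 (fun h => henb (by rw [h]; exact hb0b))
              (fun h => henb (by rw [h]; exact hsc))
          have hpair := crem_uniq hb hx hy hxy hb0b hsc (Ne.symm hsc0) hmem h2
          have hb0m : b0 ∈ ({x, y} : Set α) := by rw [hpair]; exact mem_insert _ _
          rcases hb0m with h | h
          · exact hx0 h.symm
          · exact hy0 (mem_singleton_iff.mp h).symm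
    · rintro z ⟨hzH, hzHs⟩
      have hzE : z ∈ M.E := M.closure_subset_ground _ hzH
      simp only [mem_iUnion, mem_diff, mem_singleton_iff]
      by_cases hzb : z ∈ b
      · exfalso
        have hz0 : z ≠ b0 := fun h => hb0H (h ▸ hzH)
        exact key' z hzb hz0 hzHs
      rcases crem_locate' hb hb0b hzE hzb with
        ⟨p, q, hp, hq, hp0, hq0, hpq, hmem⟩ | ⟨sc, hsc, hsc0, hmem⟩
      · exact ⟨p, ⟨hp, hp0⟩, q, ⟨hq, hq0⟩, hpq, hmem⟩
      · exfalso
        have hzs : z ≠ sc := Fij_ne2 hmem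
        have h4 : b0 ∈ M.closure {z, sc} := exch_pair hmem.1 (hnc z sc hzE (hbE hsc) hzs)
        exact hb0H (cl_pair_subset hzH (hsubH sc hsc hsc0) h4)
  refine ⟨hEplus, ?_⟩
  rw [hEplus]
  rw [show M.closure (b \ {b0}) ∩ M.closure (bs \ {b0}) =
      ⋂ i : Bool, (if i then M.closure (b \ {b0}) else M.closure (bs \ {b0})) from by
    ext z
    simp [Bool.forall_bool, and_comm]]
  exact Matroid.IsFlat.iInter (fun i => by cases i <;> simpa using cl_flat M _)
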